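/- If Γ is walk-summable, then for every pair of vertices i,j, the sum over all walks w from i to j of the walk weight ρ(w) = ∏ₖ R_{w_k w_{k+1}} converges absolutely, and x*_j = Σ_{i∈V} ρ(W_{i→j}) h_i solves Γx = h. -/

import Mathlib

open Classical Finset Matrix
open scoped ENNReal NNReal

noncomputable section

/-- `i` and `j` are adjacent. -/
def Adj {n : ℕ} (Γ : Matrix (Fin n) (Fin n) ℝ) (i j : Fin n) : Prop :=
  i ≠ j ∧ Γ i j ≠ 0

/-- A walk on the graph: a nonempty list of vertices with consecutive vertices adjacent. -/
def IsWalk {n : ℕ} (Γ : Matrix (Fin n) (Fin n) ℝ) (l : List (Fin n)) : Prop :=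
  l ≠ [] ∧ l.Chain' (Adj Γ)

/-- The weight `ρ(w)`: the product of the entries of `R` along consecutive pairs of the
walk (equal to `1` for length-0 walks). -/
def rhoW {n : ℕ} (R : Matrix (Fin n) (Fin n) ℝ) (l : List (Fin n)) : ℝ :=
  ((l.zip l.tail).map (fun p => R p.1 p.2)).prod

/-- The set `W_{i→j}` of all walks from `i` to `j`. -/
def WalkSet {n : ℕ} (Γ : Matrix (Fin n) (Fin n) ℝ) (i j : Fin n) :
    Set (List (Fin n)) :=
  {l | IsWalk Γ l ∧ l.head? = some i ∧ l.getLast? = some j}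

/-! ### Auxiliary lemmas -/

section Aux

variable {n : ℕ}

lemma rhoW_singleton (A : Matrix (Fin n) (Fin n) ℝ) (i : Fin n) : rhoW A [i] = 1 := by
  simp [rhoW]

lemma rhoW_cons_cons (A : Matrix (Fin n) (Fin n) ℝ) (a b : Fin n) (t : List (Fin n)) :
    rhoW A (a :: b :: t) = A a b * rhoW A (b :: t) := by
  simp [rhoW]

lemma rhoW_map_abs (A : Matrix (Fin n) (Fin n) ℝ) :
    ∀ l, rhoW (A.map fun a => |a|) l = |rhoW A l|
  | [] => by simp [rhoW]
  | [i] => by simp [rhoW]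
  | a :: b :: t => by
    rw [rhoW_cons_cons, rhoW_cons_cons, abs_mul, rhoW_map_abs A (b :: t), Matrix.map_apply]

lemma rhoW_eq_zero {Γ A : Matrix (Fin n) (Fin n) ℝ}
    (hA : ∀ p q, ¬ Adj Γ p q → A p q = 0) :
    ∀ l, ¬ l.Chain' (Adj Γ) → rhoW A l = 0
  | [] => fun hc => absurd List.isChain_nil hc
  | [i] => fun hc => absurd (List.isChain_singleton i) hc
  | a :: b :: t => fun hc => by
    rw [show List.Chain' (Adj Γ) (a :: b :: t) ↔ Adj Γ a b ∧ List.Chain' (Adj Γ) (b :: t) from List.isChain_cons_cons] at hc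
    rw [rhoW_cons_cons]
    by_cases hab : Adj Γ a b
    · have := rhoW_eq_zero hA (b :: t) (by tauto)
      rw [this, mul_zero]
    · rw [hA _ _ hab, zero_mul]

lemma sum_paths (A : Matrix (Fin n) (Fin n) ℝ) (j : Fin n) :
    ∀ (k : ℕ) (i : Fin n),
      (∑ v : Fin k → Fin n,
        if (i :: List.ofFn v).getLast? = some j then rhoW A (i :: List.ofFn v) else 0)
        = (A ^ k) i j
  | 0, i => by
    simp [List.ofFn_zero, rhoW_singleton, Matrix.one_apply]
  | (m + 1), i => by
    rw [pow_succ', Matrix.mul_apply]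
    rw [← Equiv.sum_comp (Fin.consEquiv (fun _ : Fin (m + 1) => Fin n)), Fintype.sum_prod_type]
    have hofn : ∀ (a : Fin n) (w : Fin m → Fin n),
        List.ofFn ((Fin.consEquiv (fun _ : Fin (m + 1) => Fin n)) (a, w)) = a :: List.ofFn w := by
      intro a w
      rw [List.ofFn_succ]
      simp [Fin.consEquiv]
    calc
      (∑ a : Fin n, ∑ w : Fin m → Fin n,
          if (i :: List.ofFn ((Fin.consEquiv (fun _ : Fin (m + 1) => Fin n)) (a, w))).getLast? = some j then
            rhoW A (i :: List.ofFn ((Fin.consEquiv (fun _ : Fin (m + 1) => Fin n)) (a, w))) else 0)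
          = ∑ a : Fin n, ∑ w : Fin m → Fin n,
            A i a * (if (a :: List.ofFn w).getLast? = some j then
              rhoW A (a :: List.ofFn w) else 0) := by
        refine Finset.sum_congr rfl fun a _ => Finset.sum_congr rfl fun w _ => ?_
        rw [hofn a w, List.getLast?_cons_cons, rhoW_cons_cons, mul_ite, mul_zero]
      _ = ∑ a : Fin n, A i a * (A ^ m) a j := by
        refine Finset.sum_congr rfl fun a _ => ?_
        rw [← Finset.mul_sum, sum_paths A j m a]

/-- The indicator-style extension of the walk weight to all lists. -/
def Gfun {n : ℕ} (A : Matrix (Fin n) (Fin n) ℝ) (i j : Fin n) (l : List (Fin n)) : ℝ :=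
  if l.head? = some i ∧ l.getLast? = some j then rhoW A l else 0

lemma Gfun_fiber_zero (A : Matrix (Fin n) (Fin n) ℝ) (i j : Fin n) :
    (∑ v : Fin 0 → Fin n, Gfun A i j (List.ofFn v)) = 0 := by
  simp [Gfun]

lemma Gfun_fiber_succ (A : Matrix (Fin n) (Fin n) ℝ) (i j : Fin n) (m : ℕ) :
    (∑ v : Fin (m + 1) → Fin n, Gfun A i j (List.ofFn v)) = (A ^ m) i j := by
  rw [← Equiv.sum_comp (Fin.consEquiv (fun _ : Fin (m + 1) => Fin n)), Fintype.sum_prod_type]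
  have hofn : ∀ (a : Fin n) (w : Fin m → Fin n),
      List.ofFn ((Fin.consEquiv (fun _ : Fin (m + 1) => Fin n)) (a, w)) = a :: List.ofFn w := by
    intro a w
    rw [List.ofFn_succ]
    simp [Fin.consEquiv]
  rw [← sum_paths A j m i]
  rw [Finset.sum_eq_single i]
  · refine Finset.sum_congr rfl fun w _ => ?_
    rw [hofn, Gfun]
    simp
  · intro a _ ha
    refine Finset.sum_eq_zero fun w _ => ?_
    rw [hofn, Gfun, if_neg]
    simp [ha]
  · intro hi
    exact absurd (Finset.mem_univ i) hi

lemma entry_le_linfty (B : Matrix (Fin n) (Fin n) ℂ) (p q : Fin n) :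
    ‖B p q‖ ≤ @norm _ (Matrix.linftyOpNormedRing.toNorm) B := by
  letI := Matrix.linftyOpNormedRing (α := ℂ) (n := Fin n)
  have h1 : ‖B p q‖₊ ≤ ‖B‖₊ := by
    rw [Matrix.linfty_opNNNorm_def]
    refine le_trans ?_ (Finset.le_sup (Finset.mem_univ p))
    exact Finset.single_le_sum (f := fun q' => ‖B p q'‖₊) (fun _ _ => zero_le)
      (Finset.mem_univ q)
  exact_mod_cast h1

/-- Geometric bound on the entries of powers of a matrix with small spectral radius. -/
lemma exists_geom_bound {M : Matrix (Fin n) (Fin n) ℝ}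
    (hws : spectralRadius ℂ (M.map Complex.ofReal) < 1) :
    ∃ c ρ : ℝ, 0 ≤ ρ ∧ ρ < 1 ∧ ∀ (k : ℕ) (i j : Fin n), |(M ^ k) i j| ≤ c * ρ ^ k := by
  letI := Matrix.linftyOpNormedRing (α := ℂ) (n := Fin n)
  letI := Matrix.linftyOpNormedAlgebra (α := ℂ) (n := Fin n) (R := ℂ)
  set a : Matrix (Fin n) (Fin n) ℂ := M.map Complex.ofReal with ha
  have hmap : ∀ k : ℕ, a ^ k = (M ^ k).map Complex.ofReal := by
    intro k
    have := map_pow (RingHom.mapMatrix (Complex.ofRealHom) (m := Fin n)) M k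
    simp only [RingHom.mapMatrix_apply] at this
    rw [ha]
    exact this.symm
  obtain ⟨r, hr1, hr2⟩ := ENNReal.lt_iff_exists_nnreal_btwn.mp hws
  have hrpos : (0 : ℝ≥0∞) < r := lt_of_le_of_lt zero_le hr1
  have hρpos : (0 : ℝ) < r := by exact_mod_cast hrpos
  have hρ1 : (r : ℝ) < 1 := by exact_mod_cast hr2
  have gel := spectrum.pow_norm_pow_one_div_tendsto_nhds_spectralRadius a
  have hev : ∀ᶠ k : ℕ in Filter.atTop,
      ENNReal.ofReal (‖a ^ k‖ ^ (1 / (k : ℝ))) < (r : ℝ≥0∞) :=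
    gel.eventually_lt_const hr1
  obtain ⟨N, hN⟩ := Filter.eventually_atTop.mp hev
  have key : ∀ k, N + 1 ≤ k → ‖a ^ k‖ ≤ (r : ℝ) ^ k := by
    intro k hk
    have h1 := hN k (by omega)
    have hk0 : (k : ℝ) ≠ 0 := Nat.cast_ne_zero.mpr (by omega)
    rw [show ((r : ℝ≥0) : ℝ≥0∞) = ENNReal.ofReal (r : ℝ) from
      (ENNReal.ofReal_coe_nnreal).symm] at h1
    have h2 : ‖a ^ k‖ ^ (1 / (k : ℝ)) < (r : ℝ) :=
      (ENNReal.ofReal_lt_ofReal_iff hρpos).mp h1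
    have h3 : ‖a ^ k‖ = (‖a ^ k‖ ^ (1 / (k : ℝ))) ^ (k : ℕ) := by
      rw [← Real.rpow_natCast (‖a ^ k‖ ^ (1 / (k : ℝ))) k, ← Real.rpow_mul (norm_nonneg _),
        one_div, inv_mul_cancel₀ hk0, Real.rpow_one]
    rw [h3]
    exact pow_le_pow_left₀ (Real.rpow_nonneg (norm_nonneg _) _) h2.le k
  set c : ℝ := (∑ k ∈ Finset.range (N + 1), ‖a ^ k‖ / (r : ℝ) ^ k) + 1 with hc
  have hc1 : (1 : ℝ) ≤ c := by
    have : (0 : ℝ) ≤ ∑ k ∈ Finset.range (N + 1), ‖a ^ k‖ / (r : ℝ) ^ k :=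
      Finset.sum_nonneg fun k _ => div_nonneg (norm_nonneg _) (by positivity)
    rw [hc]
    linarith
  refine ⟨c, (r : ℝ), hρpos.le, hρ1, fun k i j => ?_⟩
  have hentry : |(M ^ k) i j| ≤ ‖a ^ k‖ := by
    have := entry_le_linfty (a ^ k) i j
    rw [hmap k] at this ⊢
    simpa [Matrix.map_apply] using this
  refine hentry.trans ?_
  by_cases hk : N + 1 ≤ k
  · calc ‖a ^ k‖ ≤ (r : ℝ) ^ k := key k hk
      _ = 1 * (r : ℝ) ^ k := (one_mul _).symm
      _ ≤ c * (r : ℝ) ^ k := by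
        exact mul_le_mul_of_nonneg_right hc1 (by positivity)
  · push_neg at hk
    have hmem : k ∈ Finset.range (N + 1) := Finset.mem_range.mpr hk
    have h4 : ‖a ^ k‖ / (r : ℝ) ^ k ≤ c := by
      rw [hc]
      have := Finset.single_le_sum
        (f := fun k => ‖a ^ k‖ / (r : ℝ) ^ k)
        (fun k _ => div_nonneg (norm_nonneg _) (by positivity)) hmem
      linarith
    calc ‖a ^ k‖ = (‖a ^ k‖ / (r : ℝ) ^ k) * (r : ℝ) ^ k := by
          field_simp
      _ ≤ c * (r : ℝ) ^ k := mul_le_mul_of_nonneg_right h4 (by positivity)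

lemma abs_pow_entry_le (R : Matrix (Fin n) (Fin n) ℝ) :
    ∀ (k : ℕ) (i j : Fin n), |(R ^ k) i j| ≤ ((R.map fun a => |a|) ^ k) i j := by
  intro k
  induction k with
  | zero =>
    intro i j
    simp only [pow_zero, Matrix.one_apply]
    split <;> simp
  | succ m ih =>
    intro i j
    rw [pow_succ, pow_succ, Matrix.mul_apply, Matrix.mul_apply]
    calc |∑ t, (R ^ m) i t * R t j| ≤ ∑ t, |(R ^ m) i t * R t j| :=
          Finset.abs_sum_le_sum_abs _ _
      _ ≤ ∑ t, ((R.map fun a => |a|) ^ m) i t * (R.map fun a => |a|) t j := by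
          refine Finset.sum_le_sum fun t _ => ?_
          rw [abs_mul]
          exact mul_le_mul_of_nonneg_right (ih i t) (abs_nonneg _) |>.trans
            (le_of_eq (by rw [Matrix.map_apply]))
      _ = _ := rfl

end Aux

set_option maxHeartbeats 1000000 in
/-- If `Γ` is walk-summable then all walk-sums `ρ(W_{i→j})` converge absolutely and
`x*_j = Σ_i ρ(W_{i→j}) h_i` solves `Γ x = h`. -/
theorem stmt12 {n : ℕ} (Γ : Matrix (Fin n) (Fin n) ℝ) (hsym : Γ.IsSymm)
    (hdiag : ∀ i, Γ i i = 1) (hpd : Γ.PosDef) (h : Fin n → ℝ)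
    (hws : spectralRadius ℂ (((1 - Γ).map (fun a => |a|)).map (Complex.ofReal)) < 1) :
    (∀ i j : Fin n, Summable (fun w : WalkSet Γ i j => |rhoW (1 - Γ) w.val|)) ∧
    Γ.mulVec (fun j => ∑ i, (∑' w : WalkSet Γ i j, rhoW (1 - Γ) w.val) * h i) = h := by
  set R : Matrix (Fin n) (Fin n) ℝ := 1 - Γ with hR
  set M : Matrix (Fin n) (Fin n) ℝ := R.map (fun a => |a|) with hM
  -- R vanishes on non-adjacent pairs
  have hAdj : ∀ p q, ¬ Adj Γ p q → R p q = 0 := by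
    intro p q hpq
    rw [Adj] at hpq
    push_neg at hpq
    by_cases hpq' : p = q
    · subst hpq'
      simp [hR, Matrix.sub_apply, Matrix.one_apply, hdiag p]
    · have : Γ p q = 0 := hpq hpq'
      simp [hR, Matrix.sub_apply, Matrix.one_apply, hpq', this]
  have hMabs : ∀ l, rhoW M l = |rhoW R l| := rhoW_map_abs R
  -- geometric bound
  obtain ⟨c, ρ, hρ0, hρ1, hbd⟩ := exists_geom_bound (M := M) hws
  have hgeo : Summable fun k : ℕ => c * ρ ^ k :=
    (summable_geometric_of_lt_one hρ0 hρ1).mul_left c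
  have hsumM : ∀ i j, Summable fun k : ℕ => (M ^ k) i j := by
    intro i j
    refine Summable.of_norm_bounded hgeo fun k => ?_
    rw [Real.norm_eq_abs]
    exact hbd k i j
  have hsumR : ∀ i j, Summable fun k : ℕ => (R ^ k) i j := by
    intro i j
    refine Summable.of_norm_bounded hgeo fun k => ?_
    rw [Real.norm_eq_abs]
    exact ((abs_pow_entry_le R k i j).trans (le_abs_self _)).trans (hbd k i j)
  -- nonnegativity of M-weights
  have hGnonneg : ∀ (i j : Fin n) l, 0 ≤ Gfun M i j l := by
    intro i j l
    rw [Gfun]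
    split
    · rw [hMabs]; exact abs_nonneg _
    · exact le_rfl
  -- the sigma-type function and its summability
  have hσM : ∀ i j : Fin n,
      Summable fun x : Σ k : ℕ, (Fin k → Fin n) => Gfun M i j (List.ofFn x.2) := by
    intro i j
    refine (summable_sigma_of_nonneg fun x => hGnonneg i j _).mpr ⟨fun k => (hasSum_fintype _).summable, ?_⟩
    have h2 : Summable fun k : ℕ =>
        ∑' v : Fin (k + 1) → Fin n, Gfun M i j (List.ofFn v) := by
      have he : (fun k : ℕ => ∑' v : Fin (k + 1) → Fin n, Gfun M i j (List.ofFn v))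
          = fun k => (M ^ k) i j := by
        funext k
        rw [tsum_fintype, Gfun_fiber_succ]
      rw [he]
      exact hsumM i j
    exact (summable_nat_add_iff (f := fun k : ℕ => ∑' v : Fin k → Fin n, Gfun M i j (List.ofFn v)) 1).mp h2
  have hGM : ∀ i j : Fin n, Summable (Gfun M i j) := by
    intro i j
    have := (List.equivSigmaTuple (α := Fin n)).summable_iff.mpr (hσM i j)
    exact this.congr fun l => congrArg (Gfun M i j) (List.ofFn_get l)
  -- Part 1
  have part1 : ∀ i j : Fin n, Summable (fun w : WalkSet Γ i j => |rhoW R w.val|) := by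
    intro i j
    have hsub : Summable fun w : WalkSet Γ i j => Gfun M i j w.val :=
      (hGM i j).subtype _
    refine hsub.congr fun w => ?_
    obtain ⟨hw, h1, h2⟩ := w.2
    rw [Gfun, if_pos ⟨h1, h2⟩, hMabs]
  refine ⟨part1, ?_⟩
  -- Part 2
  have hGReq : ∀ i j : Fin n, ∀ l, |Gfun R i j l| = Gfun M i j l := by
    intro i j l
    rw [Gfun, Gfun]
    split
    · rw [hMabs]
    · simp
  have hGR : ∀ i j : Fin n, Summable (Gfun R i j) := by
    intro i j
    refine Summable.of_norm_bounded (hGM i j) fun l => ?_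
    rw [Real.norm_eq_abs, hGReq]
  -- indicator equality
  have hind : ∀ i j : Fin n,
      (WalkSet Γ i j).indicator (rhoW R) = Gfun R i j := by
    intro i j
    funext l
    by_cases hl : l ∈ WalkSet Γ i j
    · rw [Set.indicator_of_mem hl]
      obtain ⟨hw, h1, h2⟩ := hl
      rw [Gfun, if_pos ⟨h1, h2⟩]
    · rw [Set.indicator_of_notMem hl, Gfun]
      split
      · next hcond =>
        obtain ⟨h1, h2⟩ := hcond
        have hne : l ≠ [] := by
          intro hnil; rw [hnil] at h1; simp at h1
        have hnc : ¬ l.Chain' (Adj Γ) := by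
          intro hch
          exact hl ⟨⟨hne, hch⟩, h1, h2⟩
        exact (rhoW_eq_zero hAdj l hnc).symm
      · rfl
  -- summability over the sigma type, signed version
  have hσR : ∀ i j : Fin n,
      Summable fun x : Σ k : ℕ, (Fin k → Fin n) => Gfun R i j (List.ofFn x.2) := by
    intro i j
    refine Summable.of_norm_bounded (hσM i j) fun x => ?_
    rw [Real.norm_eq_abs, hGReq]
  -- the walk-sum equals the sum of powers
  have hSval : ∀ i j : Fin n,
      (∑' w : WalkSet Γ i j, rhoW R w.val) = ∑' k : ℕ, (R ^ k) i j := by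
    intro i j
    have e1 : (∑' w : WalkSet Γ i j, rhoW R w.val)
        = ∑' l : List (Fin n), Gfun R i j l := by
      rw [_root_.tsum_subtype, hind]
    have e2 : (∑' l : List (Fin n), Gfun R i j l)
        = ∑' x : Σ k : ℕ, (Fin k → Fin n), Gfun R i j (List.ofFn x.2) := by
      rw [← (List.equivSigmaTuple (α := Fin n)).tsum_eq
        (f := fun x : Σ k : ℕ, (Fin k → Fin n) => Gfun R i j (List.ofFn x.2))]
      exact tsum_congr fun l => (congrArg (Gfun R i j) (List.ofFn_get l)).symm
    have e3 : (∑' x : Σ k : ℕ, (Fin k → Fin n), Gfun R i j (List.ofFn x.2))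
        = ∑' (k : ℕ) (v : Fin k → Fin n), Gfun R i j (List.ofFn v) :=
      Summable.tsum_sigma' (fun k => (hasSum_fintype _).summable) (hσR i j)
    have hF : Summable fun k : ℕ => ∑' v : Fin k → Fin n, Gfun R i j (List.ofFn v) :=
      (hσR i j).sigma' fun k => (hasSum_fintype _).summable
    have e4 : (∑' (k : ℕ) (v : Fin k → Fin n), Gfun R i j (List.ofFn v))
        = ∑' k : ℕ, (R ^ k) i j := by
      rw [Summable.tsum_eq_zero_add hF]
      have h0 : (∑' v : Fin 0 → Fin n, Gfun R i j (List.ofFn v)) = 0 := by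
        rw [tsum_fintype, Gfun_fiber_zero]
      rw [h0, zero_add]
      refine tsum_congr fun k => ?_
      rw [tsum_fintype, Gfun_fiber_succ]
    rw [e1, e2, e3, e4]
  -- the final linear-algebra computation
  funext p
  rw [Matrix.mulVec]
  simp only [dotProduct]
  have hkey : ∀ i : Fin n,
      (∑ j, Γ p j * ∑' k : ℕ, (R ^ k) i j) = if i = p then 1 else 0 := by
    intro i
    have swap1 : (∑ j, Γ p j * ∑' k : ℕ, (R ^ k) i j)
        = ∑ j, ∑' k : ℕ, Γ p j * (R ^ k) i j := by
      refine Finset.sum_congr rfl fun j _ => ?_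
      rw [tsum_mul_left]
    rw [swap1, ← Summable.tsum_finsetSum fun j _ => (hsumR i j).mul_left _]
    have inner : ∀ k : ℕ, (∑ j, Γ p j * (R ^ k) i j)
        = (R ^ k) i p - (R ^ (k + 1)) i p := by
      intro k
      have hmul : (R ^ k * Γ) i p = ∑ j, (R ^ k) i j * Γ j p := Matrix.mul_apply
      have hΓ : Γ = 1 - R := by rw [hR, sub_sub_cancel]
      have : R ^ k * Γ = R ^ k - R ^ (k + 1) := by
        rw [hΓ, mul_sub, mul_one, ← pow_succ]
      calc (∑ j, Γ p j * (R ^ k) i j) = ∑ j, (R ^ k) i j * Γ j p := by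
            refine Finset.sum_congr rfl fun j _ => ?_
            rw [mul_comm, hsym.apply p j]
        _ = (R ^ k * Γ) i p := hmul.symm
        _ = (R ^ k - R ^ (k + 1)) i p := by rw [this]
        _ = (R ^ k) i p - (R ^ (k + 1)) i p := Matrix.sub_apply _ _ _ _
    calc (∑' k : ℕ, ∑ j, Γ p j * (R ^ k) i j)
        = ∑' k : ℕ, ((R ^ k) i p - (R ^ (k + 1)) i p) := tsum_congr inner
      _ = (∑' k : ℕ, (R ^ k) i p) - ∑' k : ℕ, (R ^ (k + 1)) i p :=
          Summable.tsum_sub (hsumR i p) ((summable_nat_add_iff (f := fun m : ℕ => (R ^ m) i p) 1).mpr (hsumR i p))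
      _ = (R ^ 0) i p := by
          rw [Summable.tsum_eq_zero_add (hsumR i p)]; ring
      _ = if i = p then 1 else 0 := by rw [pow_zero, Matrix.one_apply]
  calc (∑ j, Γ p j * ∑ i, (∑' w : WalkSet Γ i j, rhoW R w.val) * h i)
      = ∑ j, ∑ i, Γ p j * ((∑' k : ℕ, (R ^ k) i j) * h i) := by
        refine Finset.sum_congr rfl fun j _ => ?_
        rw [Finset.mul_sum]
        refine Finset.sum_congr rfl fun i _ => ?_
        rw [hSval i j]
    _ = ∑ i, ∑ j, Γ p j * ((∑' k : ℕ, (R ^ k) i j) * h i) := Finset.sum_comm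
    _ = ∑ i, (∑ j, Γ p j * ∑' k : ℕ, (R ^ k) i j) * h i := by
        refine Finset.sum_congr rfl fun i _ => ?_
        rw [Finset.sum_mul]
        refine Finset.sum_congr rfl fun j _ => ?_
        ring
    _ = ∑ i, (if i = p then 1 else 0) * h i := by
        refine Finset.sum_congr rfl fun i _ => ?_
        rw [hkey i]
    _ = h p := by
        simp [Finset.sum_ite_eq']

end
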